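/- For all integers a, b ≥ 3, the symmetric difference of the a × b rook graph equals 2(min(a,b) − 1). -/

import Mathlib

open scoped symmDiff

/-- `sdAt G u v` is the number of vertices outside `{u, v}` adjacent to exactly one of `u, v`. -/
noncomputable def sdAt {V : Type*} (G : SimpleGraph V) (u v : V) : ℕ :=
  ((G.neighborSet u \ {v}) ∆ (G.neighborSet v \ {u})).ncard

/-- The symmetric difference of `G`: the maximum over induced subgraphs `H` with at least two
vertices of the minimum of `sdAt H u v` over pairs of distinct vertices of `H`. -/
noncomputable def sdNum {V : Type*} [Fintype V] (G : SimpleGraph V) : ℕ :=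
  sSup {k | ∃ s : Set V, 2 ≤ s.ncard ∧
    k = sInf {m | ∃ u v : ↥s, u ≠ v ∧ m = sdAt (G.induce s) u v}}

/-- The `a × b` rook graph: distinct vertices `(i, j)` and `(k, ℓ)` are adjacent
whenever `i = k` or `j = ℓ`. -/
def rookGraph (a b : ℕ) : SimpleGraph (Fin a × Fin b) where
  Adj p q := p ≠ q ∧ (p.1 = q.1 ∨ p.2 = q.2)
  symm := ⟨by rintro p q ⟨h1, h2⟩; exact ⟨h1.symm, h2.imp Eq.symm Eq.symm⟩⟩
  loopless := ⟨fun p h => h.1 rfl⟩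

/-! ### Auxiliary lemmas -/

lemma symmDiff_nbhd {V : Type*} (G : SimpleGraph V) (u v : V) :
    (G.neighborSet u \ {v}) ∆ (G.neighborSet v \ {u}) =
    {w | w ≠ u ∧ w ≠ v ∧ Xor' (G.Adj u w) (G.Adj v w)} := by
  ext w
  simp only [Set.mem_symmDiff, Set.mem_diff, SimpleGraph.mem_neighborSet,
    Set.mem_singleton_iff, Set.mem_setOf_eq, Xor', Xor]
  have h1 : G.Adj u w → w ≠ u := fun h => h.ne'
  have h2 : G.Adj v w → w ≠ v := fun h => h.ne'
  tauto

lemma sdAt_eq {V : Type*} (G : SimpleGraph V) (u v : V) :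
    sdAt G u v = {w | w ≠ u ∧ w ≠ v ∧ Xor' (G.Adj u w) (G.Adj v w)}.ncard := by
  rw [sdAt, symmDiff_nbhd]

lemma sdAt_induce {V : Type*} (G : SimpleGraph V) (s : Set V) (u v : ↥s) :
    sdAt (G.induce s) u v =
      (s ∩ {w | w ≠ ↑u ∧ w ≠ ↑v ∧ Xor' (G.Adj ↑u w) (G.Adj ↑v w)}).ncard := by
  rw [sdAt_eq]
  rw [← Set.ncard_image_of_injective _ (Subtype.val_injective (p := fun x => x ∈ s))]
  congr 1
  ext w
  constructor
  · rintro ⟨⟨x, hx⟩, ⟨h1, h2, h3⟩, rfl⟩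
    refine ⟨hx, ?_, ?_, ?_⟩
    · simpa [Subtype.ext_iff] using h1
    · simpa [Subtype.ext_iff] using h2
    · simpa using h3
  · rintro ⟨hw, h1, h2, h3⟩
    exact ⟨⟨w, hw⟩, ⟨by simpa [Subtype.ext_iff] using h1, by simpa [Subtype.ext_iff] using h2,
      by simpa using h3⟩, rfl⟩

lemma sdAt_induce_univ {V : Type*} (G : SimpleGraph V) (u v : ↥(Set.univ : Set V)) :
    sdAt (G.induce Set.univ) u v = sdAt G ↑u ↑v := by
  rw [sdAt_induce, Set.univ_inter, sdAt_eq]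

@[simp] lemma rook_adj {a b : ℕ} (p q : Fin a × Fin b) :
    (rookGraph a b).Adj p q ↔ p ≠ q ∧ (p.1 = q.1 ∨ p.2 = q.2) := Iff.rfl

lemma rook_set_row {a b : ℕ} (i : Fin a) {j j' : Fin b} (h : j ≠ j') :
    {w : Fin a × Fin b | w ≠ (i,j) ∧ w ≠ (i,j') ∧
      Xor' ((rookGraph a b).Adj (i,j) w) ((rookGraph a b).Adj (i,j') w)}
    = ↑(({i}ᶜ : Finset (Fin a)) ×ˢ ({j,j'} : Finset (Fin b))) := by
  ext ⟨r, c⟩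
  by_cases hr : r = i <;> by_cases h1 : c = j <;> by_cases h2 : c = j' <;>
    simp_all [Xor', Prod.ext_iff] <;> simp_all [eq_comm]

lemma rook_set_col {a b : ℕ} {i i' : Fin a} (j : Fin b) (h : i ≠ i') :
    {w : Fin a × Fin b | w ≠ (i,j) ∧ w ≠ (i',j) ∧
      Xor' ((rookGraph a b).Adj (i,j) w) ((rookGraph a b).Adj (i',j) w)}
    = ↑(({i,i'} : Finset (Fin a)) ×ˢ ({j}ᶜ : Finset (Fin b))) := by
  ext ⟨r, c⟩
  by_cases hc : c = j <;> by_cases h1 : r = i <;> by_cases h2 : r = i' <;>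
    simp_all [Xor', Prod.ext_iff] <;> simp_all [eq_comm]

lemma rook_set_gen {a b : ℕ} {i k : Fin a} {j l : Fin b} (hik : i ≠ k) (hjl : j ≠ l) :
    {w : Fin a × Fin b | w ≠ (i,j) ∧ w ≠ (k,l) ∧
      Xor' ((rookGraph a b).Adj (i,j) w) ((rookGraph a b).Adj (k,l) w)}
    = ↑((({i,k} : Finset (Fin a)) ×ˢ ({j,l}ᶜ : Finset (Fin b))) ∪
        (({i,k}ᶜ : Finset (Fin a)) ×ˢ ({j,l} : Finset (Fin b)))) := by
  ext ⟨r, c⟩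
  by_cases hr1 : r = i <;> by_cases hr2 : r = k <;> by_cases h1 : c = j <;> by_cases h2 : c = l <;>
    simp_all [Xor', Prod.ext_iff] <;> simp_all [eq_comm]

lemma sdAt_row {a b : ℕ} (i : Fin a) {j j' : Fin b} (h : j ≠ j') :
    sdAt (rookGraph a b) (i,j) (i,j') = 2 * (a - 1) := by
  rw [sdAt_eq, rook_set_row i h, Set.ncard_coe_finset, Finset.card_product,
    Finset.card_compl, Finset.card_singleton, Fintype.card_fin, Finset.card_pair h]
  omega

lemma sdAt_col {a b : ℕ} {i i' : Fin a} (j : Fin b) (h : i ≠ i') :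
    sdAt (rookGraph a b) (i,j) (i',j) = 2 * (b - 1) := by
  rw [sdAt_eq, rook_set_col j h, Set.ncard_coe_finset, Finset.card_product,
    Finset.card_compl, Finset.card_singleton, Fintype.card_fin, Finset.card_pair h]

lemma sdAt_gen {a b : ℕ} {i k : Fin a} {j l : Fin b} (hik : i ≠ k) (hjl : j ≠ l) :
    sdAt (rookGraph a b) (i,j) (k,l) = 2 * (a - 2) + 2 * (b - 2) := by
  rw [sdAt_eq, rook_set_gen hik hjl, Set.ncard_coe_finset,
    Finset.card_union_of_disjoint]
  · rw [Finset.card_product, Finset.card_product, Finset.card_compl, Finset.card_compl,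
      Fintype.card_fin, Fintype.card_fin, Finset.card_pair hik, Finset.card_pair hjl]
    omega
  · rw [Finset.disjoint_left]
    rintro ⟨r, c⟩ hm hm'
    simp only [Finset.mem_product, Finset.mem_compl] at hm hm'
    exact hm.2 hm'.2

lemma sdAt_rook_ge {a b : ℕ} (ha : 3 ≤ a) (hb : 3 ≤ b) {u v : Fin a × Fin b} (huv : u ≠ v) :
    2 * (min a b - 1) ≤ sdAt (rookGraph a b) u v := by
  obtain ⟨i, j⟩ := u
  obtain ⟨k, l⟩ := v
  have hmin : min a b ≤ a ∧ min a b ≤ b := ⟨min_le_left a b, min_le_right a b⟩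
  by_cases hik : i = k
  · subst hik
    have hjl : j ≠ l := fun h => huv (by rw [h])
    rw [sdAt_row i hjl]; omega
  · by_cases hjl : j = l
    · subst hjl
      rw [sdAt_col j hik]; omega
    · rw [sdAt_gen hik hjl]; omega

lemma ncard_inter_le_fst {a b : ℕ} {s : Set (Fin a × Fin b)}
    (hinj : ∀ u ∈ s, ∀ v ∈ s, u ≠ v → Prod.fst u ≠ Prod.fst v)
    {u v : Fin a × Fin b} (hu : u ∈ s) (hv : v ∈ s) :
    (s ∩ {w | w ≠ u ∧ w ≠ v ∧
      Xor' ((rookGraph a b).Adj u w) ((rookGraph a b).Adj v w)}).ncard ≤ 2 * (a - 1) := by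
  have hsub : s ∩ {w | w ≠ u ∧ w ≠ v ∧
      Xor' ((rookGraph a b).Adj u w) ((rookGraph a b).Adj v w)} ⊆
      ↑((({u.1}ᶜ : Finset (Fin a)) ×ˢ ({u.2} : Finset (Fin b))) ∪
        (({v.1}ᶜ : Finset (Fin a)) ×ˢ ({v.2} : Finset (Fin b)))) := by
    rintro w ⟨hws, hwu, hwv, hx⟩
    have adj_u : (rookGraph a b).Adj u w → w.1 ≠ u.1 ∧ w.2 = u.2 := by
      rintro ⟨hne, h | h⟩
      · exact absurd h.symm (hinj w hws u hu hwu)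
      · exact ⟨fun h' => hinj w hws u hu hwu h', h.symm⟩
    have adj_v : (rookGraph a b).Adj v w → w.1 ≠ v.1 ∧ w.2 = v.2 := by
      rintro ⟨hne, h | h⟩
      · exact absurd h.symm (hinj w hws v hv hwv)
      · exact ⟨fun h' => hinj w hws v hv hwv h', h.symm⟩
    simp only [Finset.coe_union, Set.mem_union, Finset.coe_product, Set.mem_prod,
      Finset.coe_compl, Finset.coe_singleton, Set.mem_compl_iff, Set.mem_singleton_iff]
    rcases hx with ⟨h1, _⟩ | ⟨h1, _⟩
    · exact Or.inl ⟨(adj_u h1).1, (adj_u h1).2⟩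
    · exact Or.inr ⟨(adj_v h1).1, (adj_v h1).2⟩
  calc (s ∩ _).ncard ≤ _ := Set.ncard_le_ncard hsub (Set.toFinite _)
    _ ≤ 2 * (a - 1) := by
        rw [Set.ncard_coe_finset]
        calc _ ≤ _ := Finset.card_union_le _ _
          _ ≤ 2 * (a - 1) := by
            simp only [Finset.card_product, Finset.card_compl, Finset.card_singleton,
              Fintype.card_fin]
            omega

lemma ncard_inter_le_snd {a b : ℕ} {s : Set (Fin a × Fin b)}
    (hinj : ∀ u ∈ s, ∀ v ∈ s, u ≠ v → Prod.snd u ≠ Prod.snd v)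
    {u v : Fin a × Fin b} (hu : u ∈ s) (hv : v ∈ s) :
    (s ∩ {w | w ≠ u ∧ w ≠ v ∧
      Xor' ((rookGraph a b).Adj u w) ((rookGraph a b).Adj v w)}).ncard ≤ 2 * (b - 1) := by
  have hsub : s ∩ {w | w ≠ u ∧ w ≠ v ∧
      Xor' ((rookGraph a b).Adj u w) ((rookGraph a b).Adj v w)} ⊆
      ↑((({u.1} : Finset (Fin a)) ×ˢ ({u.2}ᶜ : Finset (Fin b))) ∪
        (({v.1} : Finset (Fin a)) ×ˢ ({v.2}ᶜ : Finset (Fin b)))) := by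
    rintro w ⟨hws, hwu, hwv, hx⟩
    have adj_u : (rookGraph a b).Adj u w → w.1 = u.1 ∧ w.2 ≠ u.2 := by
      rintro ⟨hne, h | h⟩
      · exact ⟨h.symm, fun h' => hinj w hws u hu hwu h'⟩
      · exact absurd h.symm (hinj w hws u hu hwu)
    have adj_v : (rookGraph a b).Adj v w → w.1 = v.1 ∧ w.2 ≠ v.2 := by
      rintro ⟨hne, h | h⟩
      · exact ⟨h.symm, fun h' => hinj w hws v hv hwv h'⟩
      · exact absurd h.symm (hinj w hws v hv hwv)
    simp only [Finset.coe_union, Set.mem_union, Finset.coe_product, Set.mem_prod,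
      Finset.coe_compl, Finset.coe_singleton, Set.mem_compl_iff, Set.mem_singleton_iff]
    rcases hx with ⟨h1, _⟩ | ⟨h1, _⟩
    · exact Or.inl ⟨(adj_u h1).1, (adj_u h1).2⟩
    · exact Or.inr ⟨(adj_v h1).1, (adj_v h1).2⟩
  calc (s ∩ _).ncard ≤ _ := Set.ncard_le_ncard hsub (Set.toFinite _)
    _ ≤ 2 * (b - 1) := by
        rw [Set.ncard_coe_finset]
        calc _ ≤ _ := Finset.card_union_le _ _
          _ ≤ 2 * (b - 1) := by
            simp only [Finset.card_product, Finset.card_compl, Finset.card_singleton,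
              Fintype.card_fin]
            omega

lemma exists_pair_le {a b : ℕ} (ha : 3 ≤ a) (hb : 3 ≤ b) (s : Set (Fin a × Fin b))
    (hs : 2 ≤ s.ncard) :
    ∃ u v : ↥s, u ≠ v ∧
      sdAt ((rookGraph a b).induce s) u v ≤ 2 * (min a b - 1) := by
  obtain ⟨u0, hu0, v0, hv0, huv0⟩ := (Set.one_lt_ncard (s.toFinite)).mp (by omega)
  have hminb : min a b ≤ b := min_le_right a b
  have hmina : min a b ≤ a := min_le_left a b
  rcases le_total a b with hab | hab
  · -- min = a
    have hm : min a b = a := min_eq_left hab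
    by_cases hrow : ∃ u ∈ s, ∃ v ∈ s, u ≠ v ∧ Prod.fst u = Prod.fst v
    · obtain ⟨u, hu, v, hv, huv, h1⟩ := hrow
      refine ⟨⟨u, hu⟩, ⟨v, hv⟩, by simpa [Subtype.ext_iff] using huv, ?_⟩
      rw [sdAt_induce]
      have hval : sdAt (rookGraph a b) u v = 2 * (a - 1) := by
        obtain ⟨i, j⟩ := u
        obtain ⟨k, l⟩ := v
        obtain rfl : i = k := h1
        exact sdAt_row i (fun h => huv (by rw [h]))
      calc _ ≤ _ := Set.ncard_le_ncard Set.inter_subset_right (Set.toFinite _)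
        _ = sdAt (rookGraph a b) u v := (sdAt_eq _ _ _).symm
        _ ≤ 2 * (min a b - 1) := by rw [hval, hm]
    · push_neg at hrow
      refine ⟨⟨u0, hu0⟩, ⟨v0, hv0⟩, by simpa [Subtype.ext_iff] using huv0, ?_⟩
      rw [sdAt_induce]
      calc _ ≤ 2 * (a - 1) := ncard_inter_le_fst hrow hu0 hv0
        _ ≤ 2 * (min a b - 1) := by rw [hm]
  · -- min = b
    have hm : min a b = b := min_eq_right hab
    by_cases hcol : ∃ u ∈ s, ∃ v ∈ s, u ≠ v ∧ Prod.snd u = Prod.snd v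
    · obtain ⟨u, hu, v, hv, huv, h1⟩ := hcol
      refine ⟨⟨u, hu⟩, ⟨v, hv⟩, by simpa [Subtype.ext_iff] using huv, ?_⟩
      rw [sdAt_induce]
      have hval : sdAt (rookGraph a b) u v = 2 * (b - 1) := by
        obtain ⟨i, j⟩ := u
        obtain ⟨k, l⟩ := v
        obtain rfl : j = l := h1
        exact sdAt_col j (fun h => huv (by rw [h]))
      calc _ ≤ _ := Set.ncard_le_ncard Set.inter_subset_right (Set.toFinite _)
        _ = sdAt (rookGraph a b) u v := (sdAt_eq _ _ _).symm
        _ ≤ 2 * (min a b - 1) := by rw [hval, hm]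
    · push_neg at hcol
      refine ⟨⟨u0, hu0⟩, ⟨v0, hv0⟩, by simpa [Subtype.ext_iff] using huv0, ?_⟩
      rw [sdAt_induce]
      calc _ ≤ 2 * (b - 1) := ncard_inter_le_snd hcol hu0 hv0
        _ ≤ 2 * (min a b - 1) := by rw [hm]

theorem sdNum_rookGraph (a b : ℕ) (ha : 3 ≤ a) (hb : 3 ≤ b) :
    sdNum (rookGraph a b) = 2 * (min a b - 1) := by
  have hub : ∀ k ∈ {k | ∃ s : Set (Fin a × Fin b), 2 ≤ s.ncard ∧
      k = sInf {m | ∃ u v : ↥s, u ≠ v ∧ m = sdAt ((rookGraph a b).induce s) u v}},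
      k ≤ 2 * (min a b - 1) := by
    rintro k ⟨s, hs, rfl⟩
    obtain ⟨u, v, huv, hle⟩ := exists_pair_le ha hb s hs
    exact le_trans (Nat.sInf_le ⟨u, v, huv, rfl⟩) hle
  -- membership: the full vertex set
  have hcard : 2 ≤ (Set.univ : Set (Fin a × Fin b)).ncard := by
    rw [Set.ncard_univ, Nat.card_eq_fintype_card, Fintype.card_prod, Fintype.card_fin,
      Fintype.card_fin]
    have := Nat.mul_le_mul ha hb
    omega
  -- a pair achieving the value 2 * (min a b - 1)
  have hpair : ∃ u v : ↥(Set.univ : Set (Fin a × Fin b)), u ≠ v ∧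
      sdAt ((rookGraph a b).induce Set.univ) u v = 2 * (min a b - 1) := by
    rcases le_total a b with hab | hab
    · refine ⟨⟨(⟨0, by omega⟩, ⟨0, by omega⟩), trivial⟩,
        ⟨(⟨0, by omega⟩, ⟨1, by omega⟩), trivial⟩, ?_, ?_⟩
      · simp [Subtype.ext_iff, Prod.ext_iff, Fin.ext_iff]
      · rw [sdAt_induce_univ]
        have : ((⟨0, by omega⟩ : Fin b)) ≠ (⟨1, by omega⟩ : Fin b) := by
          simp [Fin.ext_iff]
        rw [sdAt_row _ this, min_eq_left hab]
    · refine ⟨⟨(⟨0, by omega⟩, ⟨0, by omega⟩), trivial⟩,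
        ⟨(⟨1, by omega⟩, ⟨0, by omega⟩), trivial⟩, ?_, ?_⟩
      · simp [Subtype.ext_iff, Prod.ext_iff, Fin.ext_iff]
      · rw [sdAt_induce_univ]
        have : ((⟨0, by omega⟩ : Fin a)) ≠ (⟨1, by omega⟩ : Fin a) := by
          simp [Fin.ext_iff]
        rw [sdAt_col _ this, min_eq_right hab]
  obtain ⟨u1, v1, huv1, hval1⟩ := hpair
  have hmem : 2 * (min a b - 1) ∈ {k | ∃ s : Set (Fin a × Fin b), 2 ≤ s.ncard ∧
      k = sInf {m | ∃ u v : ↥s, u ≠ v ∧ m = sdAt ((rookGraph a b).induce s) u v}} := by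
    refine ⟨Set.univ, hcard, ?_⟩
    have hne : {m | ∃ u v : ↥(Set.univ : Set (Fin a × Fin b)), u ≠ v ∧
        m = sdAt ((rookGraph a b).induce Set.univ) u v}.Nonempty :=
      ⟨2 * (min a b - 1), u1, v1, huv1, hval1.symm⟩
    apply le_antisymm
    · apply le_csInf hne
      rintro m ⟨u, v, huv, rfl⟩
      rw [sdAt_induce_univ]
      exact sdAt_rook_ge ha hb (fun h => huv (Subtype.ext h))
    · exact Nat.sInf_le ⟨u1, v1, huv1, hval1.symm⟩
  rw [sdNum]
  apply le_antisymm
  · exact csSup_le ⟨_, hmem⟩ hub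
  · refine le_csSup ?_ hmem
    exact ⟨2 * (min a b - 1), hub⟩
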